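/- Let K ∈ ℝ^{m×m}, y ∈ ℝ^m, λ ≥ 0, τ ≥ 0. A pair (α*, b*) ∈ ℝ^m × ℝ is a global minimizer of the primal R-LSSVM objective H(α, b) = (λ/2)·αᵀKα + (1/m)·Σ_{i=1}^m L_τ(y_i − (Kα)_i − b) if and only if there exists a weight vector ω* ∈ ℝ^m with ω*_i ≥ 0 for all i such that (α*, b*, ω*) is a global minimizer of the augmented objective J(α, b, ω) over all α ∈ ℝ^m, b ∈ ℝ and ω ∈ ℝ^m with nonnegative entries. -/

import Mathlib

open Matrix

private lemma term_le (τ ξ ω : ℝ) (hτ : 0 ≤ τ) (hω : 0 ≤ ω) :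
    1 / 2 * min (ξ ^ 2) (τ ^ 2) ≤ 1 / 2 * ω * ξ ^ 2 + τ ^ 2 / 2 * max (1 - ω) 0 := by
  have h1 : min (ξ ^ 2) (τ ^ 2) ≤ ξ ^ 2 := min_le_left _ _
  have h2 : min (ξ ^ 2) (τ ^ 2) ≤ τ ^ 2 := min_le_right _ _
  rcases le_or_gt ω 1 with h | h
  · rw [max_eq_left (by linarith)]
    nlinarith
  · rw [max_eq_right (by linarith)]
    nlinarith [sq_nonneg ξ]

private lemma term_eq (τ ξ : ℝ) :
    1 / 2 * min (ξ ^ 2) (τ ^ 2) =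
      1 / 2 * (if ξ ^ 2 ≤ τ ^ 2 then (1:ℝ) else 0) * ξ ^ 2 +
      τ ^ 2 / 2 * max (1 - (if ξ ^ 2 ≤ τ ^ 2 then (1:ℝ) else 0)) 0 := by
  by_cases h : ξ ^ 2 ≤ τ ^ 2
  · simp [h, min_eq_left h]
  · simp [h, min_eq_right (le_of_not_ge h)]
    ring

/-- Let K ∈ ℝ^{m×m}, y ∈ ℝ^m, λ ≥ 0, τ ≥ 0.  A pair (α*, b*) is a global
    minimizer of the primal R-LSSVM objective
    H(α, b) = (λ/2)·αᵀKα + (1/m)·Σ_i (1/2)·min((y_i − (Kα)_i − b)², τ²)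
    if and only if there is a weight vector ω* with nonnegative entries such that
    (α*, b*, ω*) is a global minimizer of the augmented objective
    J(α, b, ω) = (λ/2)·αᵀKα + (1/(2m))·Σ_i ω_i·(y_i − (Kα)_i − b)²
                  + (1/m)·Σ_i (τ²/2)·max(1 − ω_i, 0)
    over all α, b and nonnegative ω. -/
theorem rlssvm_minimizer_iff_reweighted_minimizer
    (m : ℕ) (K : Matrix (Fin m) (Fin m) ℝ) (y : Fin m → ℝ)
    (lam τ : ℝ) (hlam : 0 ≤ lam) (hτ : 0 ≤ τ)
    (J : (Fin m → ℝ) → ℝ → (Fin m → ℝ) → ℝ)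
    (hJ : J = fun α b ω => lam / 2 * (α ⬝ᵥ K.mulVec α)
      + 1 / m * ∑ i, 1 / 2 * ω i * (y i - K.mulVec α i - b) ^ 2
      + 1 / m * ∑ i, τ ^ 2 / 2 * max (1 - ω i) 0)
    (Hobj : (Fin m → ℝ) → ℝ → ℝ)
    (hHobj : Hobj = fun α b => lam / 2 * (α ⬝ᵥ K.mulVec α)
      + 1 / m * ∑ i, 1 / 2 * min ((y i - K.mulVec α i - b) ^ 2) (τ ^ 2))
    (αstar : Fin m → ℝ) (bstar : ℝ) :
    (∀ (α : Fin m → ℝ) (b : ℝ), Hobj αstar bstar ≤ Hobj α b) ↔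
    (∃ ωstar : Fin m → ℝ, (∀ i, 0 ≤ ωstar i) ∧
      ∀ (α : Fin m → ℝ) (b : ℝ) (ω : Fin m → ℝ), (∀ i, 0 ≤ ω i) →
        J αstar bstar ωstar ≤ J α b ω) := by
  have hm : (0:ℝ) ≤ 1 / m := by positivity
  set W : (Fin m → ℝ) → ℝ → (Fin m → ℝ) := fun α b i =>
    if (y i - K.mulVec α i - b) ^ 2 ≤ τ ^ 2 then 1 else 0 with hW
  have hWnn : ∀ α b i, 0 ≤ W α b i := by
    intro α b i; simp only [hW]; split <;> norm_num
  have hJW : ∀ α b, Hobj α b = J α b (W α b) := by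
    intro α b
    simp only [hJ, hHobj, hW]
    rw [add_assoc]
    congr 1
    rw [← mul_add, ← Finset.sum_add_distrib]
    exact congrArg _ (Finset.sum_congr rfl fun i _ => term_eq τ _)
  have hHle : ∀ α b (ω : Fin m → ℝ), (∀ i, 0 ≤ ω i) → Hobj α b ≤ J α b ω := by
    intro α b ω hω
    simp only [hJ, hHobj]
    rw [add_assoc, ← mul_add, ← Finset.sum_add_distrib]
    exact add_le_add le_rfl (mul_le_mul_of_nonneg_left
      (Finset.sum_le_sum fun i _ => term_le τ _ (ω i) hτ (hω i)) hm)
  constructor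
  · intro hmin
    exact ⟨W αstar bstar, hWnn αstar bstar, fun α b ω hω =>
      (hJW αstar bstar) ▸ le_trans (hmin α b) (hHle α b ω hω)⟩
  · rintro ⟨ωstar, hnn, hmin⟩ α b
    calc Hobj αstar bstar ≤ J αstar bstar ωstar := hHle _ _ _ hnn
      _ ≤ J α b (W α b) := hmin α b _ (hWnn α b)
      _ = Hobj α b := (hJW α b).symm
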